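/- Quadratic energy gap from convexity: let f ∈ Γ^k_{M,J} with ∫∫ √(1+|p|²) f dp dx < ∞, and let φ, ψ be potentials with E_kin(f,φ) < ∞ and E_kin(f,ψ) < ∞. Assume ψ satisfies the weak Euler–Lagrange identity tested against φ−ψ: ∫_{ℝ³} ∇ψ·(∇φ−∇ψ) dx = −∫_{ℝ³}∫_{ℝ³} e^{2ψ(x)} (e^{2ψ(x)}+|p|²)^{-1/2} f(x,p) (φ(x)−ψ(x)) dp dx, where both sides are finite. Then 𝓔(f,φ) − 𝓔(f,ψ) ≥ (1/2)‖∇φ−∇ψ‖²_{L²(ℝ³)}. -/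

import Mathlib

open MeasureTheory Real Filter Topology
open scoped ENNReal

noncomputable section

/-- Euclidean 3-space. -/
abbrev E3 := EuclideanSpace ℝ (Fin 3)

/-- `φ` belongs to (a C¹ surrogate of) the space `D¹(ℝ³)`: it is continuously
differentiable, its gradient is square integrable and it vanishes at infinity in
the sense that `{|φ| > a}` has finite measure for every `a > 0`. -/
def IsPotential (φ : E3 → ℝ) : Prop :=
  ContDiff ℝ 1 φ ∧ (∫⁻ x : E3, ENNReal.ofReal (‖gradient φ x‖ ^ 2)) < ⊤ ∧
    ∀ a : ℝ, 0 < a → volume {x : E3 | a < |φ x|} < ⊤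

/-- `f ∈ Γ^k_{M,J}`: `f` is measurable, a.e. nonnegative, with `‖f‖_{L¹} = M` and
`‖f‖_{L^{1+1/k}} ≤ J` (in particular `f ∈ L¹ ∩ L^{1+1/k}`). -/
def InGamma (k M J : ℝ) (f : E3 → E3 → ℝ) : Prop :=
  Measurable (Function.uncurry f) ∧
  (∀ᵐ z : E3 × E3, 0 ≤ f z.1 z.2) ∧
  (∫⁻ z : E3 × E3, ENNReal.ofReal (f z.1 z.2)) = ENNReal.ofReal M ∧
  eLpNorm (Function.uncurry f) (ENNReal.ofReal (1 + 1/k)) volume ≤ ENNReal.ofReal J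

/-- Kinetic energy `E_kin(f,φ) = ∫∫ √(e^{2φ(x)}+|p|²) f(x,p) dp dx` (value in `[0,∞]`). -/
def kinE (f : E3 → E3 → ℝ) (φ : E3 → ℝ) : ℝ≥0∞ :=
  ∫⁻ z : E3 × E3, ENNReal.ofReal (Real.sqrt (Real.exp (2 * φ z.1) + ‖z.2‖ ^ 2) * f z.1 z.2)

/-- Energy functional `𝓔(f,φ) = E_kin(f,φ) + (1/2)∫ |∇φ|²` (value in `[0,∞]`). -/
def energy (f : E3 → E3 → ℝ) (φ : E3 → ℝ) : ℝ≥0∞ :=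
  kinE f φ + (∫⁻ x : E3, ENNReal.ofReal (‖gradient φ x‖ ^ 2)) / 2

/-- `(f,φ)` is admissible: `f ∈ Γ^k_{M,J}`, `φ` is a potential and
`∫∫ √(1+|p|²) f dp dx < ∞`. -/
def Admissible (k M J : ℝ) (f : E3 → E3 → ℝ) (φ : E3 → ℝ) : Prop :=
  InGamma k M J f ∧ IsPotential φ ∧
  (∫⁻ z : E3 × E3, ENNReal.ofReal (Real.sqrt (1 + ‖z.2‖ ^ 2) * f z.1 z.2)) < ⊤

/-- The energy infimum `I^k_{M,J} = inf {𝓔(f,φ) : (f,φ) admissible}`. -/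
def energyInf (k M J : ℝ) : ℝ≥0∞ :=
  sInf { e : ℝ≥0∞ | ∃ f φ, Admissible k M J f φ ∧ e = energy f φ }

lemma key_ineq (a b c : ℝ) (hc : 0 ≤ c) :
    Real.sqrt (Real.exp (2*b) + c) + Real.exp (2*b) / Real.sqrt (Real.exp (2*b) + c) * (a - b)
      ≤ Real.sqrt (Real.exp (2*a) + c) := by
  set s := Real.sqrt (Real.exp (2*b) + c) with hs_def
  have hs : 0 < s := Real.sqrt_pos.2 (by positivity)
  have hss : s * s = Real.exp (2*b) + c := Real.mul_self_sqrt (by positivity)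
  have h1 : Real.exp (a+b) + c ≤ Real.sqrt (Real.exp (2*a) + c) * s := by
    rw [hs_def, ← Real.sqrt_mul (by positivity)]
    have h2 : (Real.exp (a+b) + c) ^ 2 ≤ (Real.exp (2*a) + c) * (Real.exp (2*b) + c) := by
      have e1 : Real.exp (2*a) = Real.exp a * Real.exp a := by
        rw [← Real.exp_add]; ring_nf
      have e2 : Real.exp (2*b) = Real.exp b * Real.exp b := by
        rw [← Real.exp_add]; ring_nf
      have e3 : Real.exp (a+b) = Real.exp a * Real.exp b := Real.exp_add a b
      nlinarith [sq_nonneg (Real.exp a - Real.exp b), hc]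
    calc Real.exp (a+b) + c = Real.sqrt ((Real.exp (a+b) + c)^2) :=
          (Real.sqrt_sq (by positivity)).symm
      _ ≤ _ := Real.sqrt_le_sqrt h2
  have h2 : Real.exp (2*b) + Real.exp (2*b) * (a - b) ≤ Real.exp (a+b) := by
    have h := Real.add_one_le_exp (a - b)
    have hpos := Real.exp_pos (2*b)
    have h' : Real.exp (2*b) * (a - b + 1) ≤ Real.exp (2*b) * Real.exp (a-b) :=
      mul_le_mul_of_nonneg_left h hpos.le
    rw [← Real.exp_add] at h'
    have heq : 2*b + (a - b) = a + b := by ring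
    rw [heq] at h'; linarith
  have h3 : s * s + Real.exp (2*b) * (a - b) ≤ Real.sqrt (Real.exp (2*a) + c) * s := by
    rw [hss]; linarith
  have h4 : (s + Real.exp (2*b) / s * (a - b)) * s ≤ Real.sqrt (Real.exp (2*a) + c) * s := by
    have he : (s + Real.exp (2*b) / s * (a - b)) * s
        = s*s + (Real.exp (2*b)/s*s)*(a-b) := by ring
    rw [he, div_mul_cancel₀ _ hs.ne']
    exact h3
  exact le_of_mul_le_mul_right h4 hs

lemma continuous_gradient_of_contDiff {φ : E3 → ℝ} (h : ContDiff ℝ 1 φ) :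
    Continuous (gradient φ) := by
  have := h.continuous_fderiv one_ne_zero
  exact (InnerProductSpace.toDual ℝ E3).symm.continuous.comp this

/-- quadratic energy gap from convexity.  If `ψ` satisfies the weak
Euler–Lagrange identity tested against `φ − ψ`, then
`𝓔(f,φ) − 𝓔(f,ψ) ≥ (1/2)‖∇φ − ∇ψ‖²_{L²}`. -/
theorem energy_gap_quadratic (k M J : ℝ)
    (hk : 0 < k) (hk2 : k < 2) (hM : 0 < M) (hJ : 0 < J)
    (f : E3 → E3 → ℝ) (φ ψ : E3 → ℝ)
    (hf : InGamma k M J f)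
    (hfin : (∫⁻ z : E3 × E3, ENNReal.ofReal (Real.sqrt (1 + ‖z.2‖ ^ 2) * f z.1 z.2)) < ⊤)
    (hφ : IsPotential φ) (hψ : IsPotential ψ)
    (hkinφ : kinE f φ < ⊤) (hkinψ : kinE f ψ < ⊤)
    (hintR : Integrable (fun z : E3 × E3 =>
      Real.exp (2 * ψ z.1) / Real.sqrt (Real.exp (2 * ψ z.1) + ‖z.2‖ ^ 2)
        * f z.1 z.2 * (φ z.1 - ψ z.1)) volume)
    (hintL : Integrable (fun x : E3 =>
      (inner ℝ (gradient ψ x) (gradient φ x - gradient ψ x) : ℝ)) volume)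
    (hEL : (∫ x : E3, (inner ℝ (gradient ψ x) (gradient φ x - gradient ψ x) : ℝ))
      = - ∫ z : E3 × E3,
          Real.exp (2 * ψ z.1) / Real.sqrt (Real.exp (2 * ψ z.1) + ‖z.2‖ ^ 2)
            * f z.1 z.2 * (φ z.1 - ψ z.1)) :
    energy f ψ + ENNReal.ofReal ((1/2) * ∫ x : E3, ‖gradient φ x - gradient ψ x‖ ^ 2)
      ≤ energy f φ := by
  obtain ⟨hfm, hfpos, -, -⟩ := hf
  have hcφ := continuous_gradient_of_contDiff hφ.1
  have hcψ := continuous_gradient_of_contDiff hψ.1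
  -- integrability of gradient squares
  have hIφ : Integrable (fun x : E3 => ‖gradient φ x‖^2) volume := by
    refine ⟨((hcφ.norm.pow 2).aestronglyMeasurable), ?_⟩
    rw [hasFiniteIntegral_iff_ofReal (Eventually.of_forall fun x => by positivity)]
    exact hφ.2.1
  have hIψ : Integrable (fun x : E3 => ‖gradient ψ x‖^2) volume := by
    refine ⟨((hcψ.norm.pow 2).aestronglyMeasurable), ?_⟩
    rw [hasFiniteIntegral_iff_ofReal (Eventually.of_forall fun x => by positivity)]
    exact hψ.2.1
  have hIΔ : Integrable (fun x : E3 => ‖gradient φ x - gradient ψ x‖^2) volume := by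
    refine ((hIφ.const_mul 2).add (hIψ.const_mul 2)).mono'
      (((hcφ.sub hcψ).norm.pow 2).aestronglyMeasurable) ?_
    filter_upwards with x
    simp only [Pi.add_apply]
    rw [Real.norm_of_nonneg (by positivity)]
    have h2 : ‖gradient φ x - gradient ψ x‖^2 ≤ (‖gradient φ x‖ + ‖gradient ψ x‖)^2 :=
      pow_le_pow_left₀ (norm_nonneg _) (norm_sub_le _ _) 2
    nlinarith [h2, sq_nonneg (‖gradient φ x‖ - ‖gradient ψ x‖)]
  -- kinetic integrands
  have hcsqrt : ∀ χ : E3 → ℝ, ContDiff ℝ 1 χ → Continuous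
      (fun z : E3 × E3 => Real.sqrt (Real.exp (2 * χ z.1) + ‖z.2‖ ^ 2)) := by
    intro χ hχ
    exact Real.continuous_sqrt.comp
      ((Real.continuous_exp.comp (continuous_const.mul (hχ.continuous.comp continuous_fst))).add
        ((continuous_snd.norm).pow 2))
  have hintA : Integrable (fun z : E3 × E3 =>
      Real.sqrt (Real.exp (2 * φ z.1) + ‖z.2‖ ^ 2) * f z.1 z.2) volume := by
    refine ⟨(((hcsqrt φ hφ.1).measurable).mul hfm).aestronglyMeasurable, ?_⟩
    rw [hasFiniteIntegral_iff_ofReal ?_]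
    · exact hkinφ
    · filter_upwards [hfpos] with z hz; positivity
  have hintB : Integrable (fun z : E3 × E3 =>
      Real.sqrt (Real.exp (2 * ψ z.1) + ‖z.2‖ ^ 2) * f z.1 z.2) volume := by
    refine ⟨(((hcsqrt ψ hψ.1).measurable).mul hfm).aestronglyMeasurable, ?_⟩
    rw [hasFiniteIntegral_iff_ofReal ?_]
    · exact hkinψ
    · filter_upwards [hfpos] with z hz; positivity
  set A := ∫ z : E3 × E3, Real.sqrt (Real.exp (2 * φ z.1) + ‖z.2‖ ^ 2) * f z.1 z.2 with hA_def
  set B := ∫ z : E3 × E3, Real.sqrt (Real.exp (2 * ψ z.1) + ‖z.2‖ ^ 2) * f z.1 z.2 with hB_def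
  set R := ∫ z : E3 × E3,
      Real.exp (2 * ψ z.1) / Real.sqrt (Real.exp (2 * ψ z.1) + ‖z.2‖ ^ 2)
        * f z.1 z.2 * (φ z.1 - ψ z.1) with hR_def
  set L := ∫ x : E3, (inner ℝ (gradient ψ x) (gradient φ x - gradient ψ x) : ℝ) with hL_def
  set G := ∫ x : E3, ‖gradient φ x‖^2 with hG_def
  set H := ∫ x : E3, ‖gradient ψ x‖^2 with hH_def
  set D := ∫ x : E3, ‖gradient φ x - gradient ψ x‖^2 with hD_def
  have hnnA : 0 ≤ᵐ[volume] fun z : E3 × E3 =>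
      Real.sqrt (Real.exp (2 * φ z.1) + ‖z.2‖ ^ 2) * f z.1 z.2 := by
    filter_upwards [hfpos] with z hz; positivity
  have hnnB : 0 ≤ᵐ[volume] fun z : E3 × E3 =>
      Real.sqrt (Real.exp (2 * ψ z.1) + ‖z.2‖ ^ 2) * f z.1 z.2 := by
    filter_upwards [hfpos] with z hz; positivity
  have hkinφ_eq : kinE f φ = ENNReal.ofReal A :=
    (ofReal_integral_eq_lintegral_ofReal hintA hnnA).symm
  have hkinψ_eq : kinE f ψ = ENNReal.ofReal B :=
    (ofReal_integral_eq_lintegral_ofReal hintB hnnB).symm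
  have hGeq : (∫⁻ x : E3, ENNReal.ofReal (‖gradient φ x‖ ^ 2)) = ENNReal.ofReal G :=
    (ofReal_integral_eq_lintegral_ofReal hIφ
      (Eventually.of_forall fun x => by positivity)).symm
  have hHeq : (∫⁻ x : E3, ENNReal.ofReal (‖gradient ψ x‖ ^ 2)) = ENNReal.ofReal H :=
    (ofReal_integral_eq_lintegral_ofReal hIψ
      (Eventually.of_forall fun x => by positivity)).symm
  -- convexity inequality: B + R ≤ A
  have hBRA : B + R ≤ A := by
    rw [hA_def, hB_def, hR_def, ← integral_add hintB hintR]
    refine integral_mono_ae (hintB.add hintR) hintA ?_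
    filter_upwards [hfpos] with z hz
    have h := mul_le_mul_of_nonneg_right
      (key_ineq (φ z.1) (ψ z.1) (‖z.2‖^2) (by positivity)) hz
    nlinarith [h]
  -- gradient decomposition
  have hGHD : G = H + 2 * L + D := by
    have hpt : ∀ x : E3, ‖gradient φ x‖^2
        = ‖gradient ψ x‖^2 + 2 * (inner ℝ (gradient ψ x) (gradient φ x - gradient ψ x) : ℝ)
          + ‖gradient φ x - gradient ψ x‖^2 := by
      intro x
      have h := norm_add_sq_real (gradient ψ x) (gradient φ x - gradient ψ x)
      simpa using h
    rw [hG_def, hH_def, hL_def, hD_def]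
    calc (∫ x : E3, ‖gradient φ x‖^2)
        = ∫ x : E3, (‖gradient ψ x‖^2
            + 2 * (inner ℝ (gradient ψ x) (gradient φ x - gradient ψ x) : ℝ)
            + ‖gradient φ x - gradient ψ x‖^2) := by
          exact integral_congr_ae (Eventually.of_forall hpt)
      _ = _ := by
          have hI1 : Integrable (fun x : E3 => ‖gradient ψ x‖^2
              + 2 * (inner ℝ (gradient ψ x) (gradient φ x - gradient ψ x) : ℝ)) volume :=
            hIψ.add (hintL.const_mul 2)
          rw [integral_add hI1 hIΔ, integral_add hIψ (hintL.const_mul 2), integral_const_mul]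
  have hA0 : 0 ≤ A := integral_nonneg_of_ae hnnA
  have hB0 : 0 ≤ B := integral_nonneg_of_ae hnnB
  have hG0 : 0 ≤ G := integral_nonneg fun x => by positivity
  have hH0 : 0 ≤ H := integral_nonneg fun x => by positivity
  have hD0 : 0 ≤ D := integral_nonneg fun x => by positivity
  have h2 : (2 : ℝ≥0∞) = ENNReal.ofReal 2 := by norm_num
  rw [energy, energy, hkinφ_eq, hkinψ_eq, hGeq, hHeq, h2,
    ← ENNReal.ofReal_div_of_pos two_pos, ← ENNReal.ofReal_div_of_pos two_pos,
    ← ENNReal.ofReal_add hB0 (by positivity),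
    ← ENNReal.ofReal_add (by positivity) (by positivity),
    ← ENNReal.ofReal_add hA0 (by positivity)]
  apply ENNReal.ofReal_le_ofReal
  have hLR : L = -R := hEL
  linarith [hBRA]
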